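/- Let n ≥ 1 be an integer and t < 0. (i) Setting θ = arcsin(e^{nt}), so that dθ/dt = n tan θ, every real y with (1 − cos θ)/sin θ ≤ y ≤ sin θ satisfies y · (dθ/dt)/sin θ − n tan θ ≤ 0. (ii) Setting θ = arcsin(e^{2nt}), so that dθ/dt = 2n tan θ, every real y with y ≥ (1 − cos θ)/sin θ satisfies y · (dθ/dt)/sin θ − n tan θ ≥ n ((1 − cos θ)/sin θ)² tan θ ≥ 0. (These inequalities express that the shrinking family of spheres S_{arcsin e^{nt}} moves inward no faster than its mean curvature n tan θ, while the family S_{arcsin e^{2nt}} moves inward at least as fast as its mean curvature.) -/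

import Mathlib

open Real Filter

private lemma derivAux17 (a t : ℝ) (ha : 0 < a) (ht : t < 0) :
    deriv (fun s : ℝ => Real.arcsin (Real.exp (a * s))) t
      = a * Real.tan (Real.arcsin (Real.exp (a * t))) := by
  set x := Real.exp (a * t) with hx
  have hx0 : 0 < x := Real.exp_pos _
  have hx1 : x < 1 := by
    rw [hx, Real.exp_lt_one_iff]
    exact mul_neg_of_pos_of_neg ha ht
  have h1 : HasDerivAt (fun s : ℝ => Real.exp (a * s)) (a * x) t := by
    simpa [hx, mul_comm] using ((hasDerivAt_id t).const_mul a).exp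
  have h2 : HasDerivAt Real.arcsin (1 / Real.sqrt (1 - x ^ 2)) x :=
    Real.hasDerivAt_arcsin (by linarith) (by linarith)
  have h3 := h2.comp t h1
  have h4 : HasDerivAt (fun s : ℝ => Real.arcsin (Real.exp (a * s)))
      (1 / Real.sqrt (1 - x ^ 2) * (a * x)) t := h3
  rw [h4.deriv, Real.tan_arcsin]
  ring

private lemma basicAux17 (x : ℝ) (hx0 : 0 < x) (hx1 : x < 1) :
    Real.sin (Real.arcsin x) = x ∧
    Real.cos (Real.arcsin x) = Real.sqrt (1 - x ^ 2) ∧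
    Real.tan (Real.arcsin x) = x / Real.sqrt (1 - x ^ 2) := by
  exact ⟨Real.sin_arcsin (by linarith) (by linarith), Real.cos_arcsin x, Real.tan_arcsin x⟩

/-- The family `S_{arcsin e^{nt}}` moves inward no faster than its mean curvature
`n tan θ`, while the family `S_{arcsin e^{2nt}}` moves inward at least as fast as its
mean curvature. -/
theorem stmt17 (n : ℕ) (hn : 1 ≤ n) (t : ℝ) (ht : t < 0) :
    -- (i) θ⁻(t) = arcsin (e^{nt})
    (deriv (fun s : ℝ => Real.arcsin (Real.exp ((n : ℝ) * s))) t =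
      (n : ℝ) * Real.tan (Real.arcsin (Real.exp ((n : ℝ) * t)))) ∧
    (∀ y : ℝ,
      (1 - Real.cos (Real.arcsin (Real.exp ((n : ℝ) * t)))) /
          Real.sin (Real.arcsin (Real.exp ((n : ℝ) * t))) ≤ y →
      y ≤ Real.sin (Real.arcsin (Real.exp ((n : ℝ) * t))) →
      y * ((n : ℝ) * Real.tan (Real.arcsin (Real.exp ((n : ℝ) * t)))) /
          Real.sin (Real.arcsin (Real.exp ((n : ℝ) * t))) -
        (n : ℝ) * Real.tan (Real.arcsin (Real.exp ((n : ℝ) * t))) ≤ 0) ∧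
    -- (ii) θ⁺(t) = arcsin (e^{2nt})
    (deriv (fun s : ℝ => Real.arcsin (Real.exp (2 * (n : ℝ) * s))) t =
      2 * (n : ℝ) * Real.tan (Real.arcsin (Real.exp (2 * (n : ℝ) * t)))) ∧
    (∀ y : ℝ,
      (1 - Real.cos (Real.arcsin (Real.exp (2 * (n : ℝ) * t)))) /
          Real.sin (Real.arcsin (Real.exp (2 * (n : ℝ) * t))) ≤ y →
      (n : ℝ) * ((1 - Real.cos (Real.arcsin (Real.exp (2 * (n : ℝ) * t)))) /
            Real.sin (Real.arcsin (Real.exp (2 * (n : ℝ) * t)))) ^ 2 *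
          Real.tan (Real.arcsin (Real.exp (2 * (n : ℝ) * t))) ≤
        y * (2 * (n : ℝ) * Real.tan (Real.arcsin (Real.exp (2 * (n : ℝ) * t)))) /
            Real.sin (Real.arcsin (Real.exp (2 * (n : ℝ) * t))) -
          (n : ℝ) * Real.tan (Real.arcsin (Real.exp (2 * (n : ℝ) * t)))) ∧
    (0 ≤ (n : ℝ) * ((1 - Real.cos (Real.arcsin (Real.exp (2 * (n : ℝ) * t)))) /
          Real.sin (Real.arcsin (Real.exp (2 * (n : ℝ) * t)))) ^ 2 *
        Real.tan (Real.arcsin (Real.exp (2 * (n : ℝ) * t)))) := by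
  have hn' : (0 : ℝ) < n := by exact_mod_cast hn
  -- basic facts for x = e^{nt}
  have key : ∀ x : ℝ, 0 < x → x < 1 →
      ∃ c : ℝ, 0 < c ∧ c ≤ 1 ∧ c ^ 2 = 1 - x ^ 2 ∧
        Real.sin (Real.arcsin x) = x ∧ Real.cos (Real.arcsin x) = c ∧
        Real.tan (Real.arcsin x) = x / c := by
    intro x hx0 hx1
    obtain ⟨hs, hc, htan⟩ := basicAux17 x hx0 hx1
    refine ⟨Real.sqrt (1 - x ^ 2), Real.sqrt_pos.2 (by nlinarith), ?_, ?_, hs, hc, htan⟩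
    · exact Real.sqrt_le_one.2 (by nlinarith)
    · exact Real.sq_sqrt (by nlinarith)
  have hxlt : ∀ a : ℝ, 0 < a → Real.exp (a * t) < 1 := fun a ha => by
    rw [Real.exp_lt_one_iff]; exact mul_neg_of_pos_of_neg ha ht
  obtain ⟨c₁, hc₁0, hc₁1, hc₁sq, hs₁, hcos₁, ht₁⟩ :=
    key (Real.exp ((n : ℝ) * t)) (Real.exp_pos _) (hxlt _ hn')
  obtain ⟨c₂, hc₂0, hc₂1, hc₂sq, hs₂, hcos₂, ht₂⟩ :=
    key (Real.exp (2 * (n : ℝ) * t)) (Real.exp_pos _) (hxlt _ (by linarith))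
  set x₁ := Real.exp ((n : ℝ) * t) with hx₁
  set x₂ := Real.exp (2 * (n : ℝ) * t) with hx₂
  have hx₁0 : 0 < x₁ := Real.exp_pos _
  have hx₂0 : 0 < x₂ := Real.exp_pos _
  refine ⟨derivAux17 _ _ hn' ht, ?_, derivAux17 _ _ (by linarith) ht, ?_, ?_⟩
  · intro y _ hy2
    rw [hs₁, ht₁] at *
    have h5 : (n : ℝ) * x₁ / c₁ * y ≤ (n : ℝ) * x₁ / c₁ * x₁ :=
      mul_le_mul_of_nonneg_left hy2 (by positivity)
    have h6 : y * ((n : ℝ) * (x₁ / c₁)) / x₁ - (n : ℝ) * (x₁ / c₁)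
        = ((n : ℝ) * x₁ / c₁ * y - (n : ℝ) * x₁ / c₁ * x₁) / x₁ := by
      field_simp
    rw [h6]
    apply div_nonpos_of_nonpos_of_nonneg (by linarith) (le_of_lt hx₁0)
  · intro y hy
    rw [hs₂, hcos₂, ht₂] at *
    have hb : 0 ≤ (1 - c₂) / x₂ := div_nonneg (by linarith) (le_of_lt hx₂0)
    have key2 : (n : ℝ) * ((1 - c₂) / x₂) ^ 2 * (x₂ / c₂) =
        ((1 - c₂) / x₂) * (2 * (n : ℝ) * (x₂ / c₂)) / x₂ - (n : ℝ) * (x₂ / c₂) := by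
      have hb2 : (1 - c₂) ^ 2 = 2 * (1 - c₂) - x₂ ^ 2 := by linear_combination hc₂sq
      field_simp
      linear_combination (n:ℝ) * hb2 + (1 - (n:ℝ)) * hc₂sq
    rw [key2]
    gcongr
  · rw [hs₂, hcos₂, ht₂]
    have hb : 0 ≤ (1 - c₂) / x₂ := div_nonneg (by linarith) (le_of_lt hx₂0)
    positivity
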